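/- For all non-negative integers k and n, F(k)³·∑_{j=0}^{n} (−1)^{(k+1)(n+j)}·j·C(n+j, 2j)·L(k)^{2j} = (1/10)·((2n+1)·F(2k)·L((2n+1)k) − F((2n+1)k)·L(k)²), as an identity of rational numbers, where C(m,j) denotes the binomial coefficient. -/

import Mathlib

open Finset

section Aux
variable {R : Type*} [CommRing R]

noncomputable def Pp (w A : R) (n : ℕ) : R :=
  ∑ j ∈ range (n + 1), ((n + j).choose (2 * j) : R) * w ^ (n - j) * A ^ j

noncomputable def Tt (w A : R) (n : ℕ) : R :=
  ∑ j ∈ range (n + 1), (j : R) * ((n + j).choose (2 * j) : R) * w ^ (n - j) * A ^ j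

lemma Pp_pad (w A : R) (n M : ℕ) (h : n + 1 ≤ M) :
    Pp w A n = ∑ j ∈ range M, ((n + j).choose (2 * j) : R) * w ^ (n - j) * A ^ j := by
  refine Finset.sum_subset (Finset.range_mono h) ?_
  intro j _ hj
  simp only [Finset.mem_range, not_lt] at hj
  have : (n + j).choose (2 * j) = 0 := Nat.choose_eq_zero_of_lt (by omega)
  simp [this]

lemma Tt_pad (w A : R) (n M : ℕ) (h : n + 1 ≤ M) :
    Tt w A n = ∑ j ∈ range M, (j : R) * ((n + j).choose (2 * j) : R) * w ^ (n - j) * A ^ j := by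
  refine Finset.sum_subset (Finset.range_mono h) ?_
  intro j _ hj
  simp only [Finset.mem_range, not_lt] at hj
  have : (n + j).choose (2 * j) = 0 := Nat.choose_eq_zero_of_lt (by omega)
  simp [this]

lemma choose_key (m jj : ℕ) :
    (m + 3 + jj).choose (2 * jj + 2) + (m + 1 + jj).choose (2 * jj + 2)
      = (m + 1 + jj).choose (2 * jj) + 2 * ((m + 2 + jj).choose (2 * jj + 2)) := by
  rw [show m + 3 + jj = m + 1 + jj + 1 + 1 from by omega,
    show 2 * jj + 2 = 2 * jj + 1 + 1 from by omega,
    show m + 2 + jj = m + 1 + jj + 1 from by omega]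
  have p1 : (m + 1 + jj + 1 + 1).choose (2 * jj + 1 + 1)
      = (m + 1 + jj + 1).choose (2 * jj + 1) + (m + 1 + jj + 1).choose (2 * jj + 1 + 1) :=
    Nat.choose_succ_succ _ _
  have p2 : (m + 1 + jj + 1).choose (2 * jj + 1)
      = (m + 1 + jj).choose (2 * jj) + (m + 1 + jj).choose (2 * jj + 1) :=
    Nat.choose_succ_succ _ _
  have p3 : (m + 1 + jj + 1).choose (2 * jj + 1 + 1)
      = (m + 1 + jj).choose (2 * jj + 1) + (m + 1 + jj).choose (2 * jj + 1 + 1) :=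
    Nat.choose_succ_succ _ _
  linarith

lemma hA_shift (w A : R) (n : ℕ) :
    A * Pp w A (n + 1)
      = ∑ j ∈ range (n + 3), (fun j => match j with
          | 0 => (0 : R)
          | jj + 1 => ((n + 1 + jj).choose (2 * jj) : R) * w ^ (n + 1 - jj) * A ^ (jj + 1)) j := by
  rw [Finset.sum_range_succ' _ (n + 2)]
  simp only []
  rw [Pp, show n + 1 + 1 = n + 2 from rfl, Finset.mul_sum, add_zero]
  exact Finset.sum_congr rfl fun j hj => by ring

lemma R1 (w A : R) (n : ℕ) :
    Pp w A (n + 2) = (A + 2 * w) * Pp w A (n + 1) - w ^ 2 * Pp w A n := by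
  rw [add_mul, hA_shift]
  rw [Pp_pad w A (n + 1) (n + 3) (by omega), Pp_pad w A n (n + 3) (by omega),
    Pp, show n + 2 + 1 = n + 3 from rfl]
  rw [Finset.mul_sum, Finset.mul_sum, ← Finset.sum_add_distrib, ← Finset.sum_sub_distrib]
  refine Finset.sum_congr rfl fun j hj => ?_
  simp only [Finset.mem_range] at hj
  match j with
  | 0 =>
    simp only []
    norm_num
    ring
  | jj + 1 =>
    simp only []
    rcases Nat.lt_or_ge jj n with h | h
    · obtain ⟨d, rfl⟩ : ∃ d, n = jj + 1 + d := ⟨n - jj - 1, by omega⟩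
      rw [show jj + 1 + d + 2 - (jj + 1) = d + 2 from by omega,
        show jj + 1 + d + 1 - jj = d + 2 from by omega,
        show jj + 1 + d + 1 - (jj + 1) = d + 1 from by omega,
        show jj + 1 + d - (jj + 1) = d from by omega,
        show jj + 1 + d + 2 + (jj + 1) = jj + d + 1 + 3 + jj from by omega,
        show 2 * (jj + 1) = 2 * jj + 2 from by omega,
        show jj + 1 + d + 1 + jj = jj + d + 1 + 1 + jj from by omega,
        show jj + 1 + d + 1 + (jj + 1) = jj + d + 1 + 2 + jj from by omega,
        show jj + 1 + d + (jj + 1) = jj + d + 1 + 1 + jj from by omega]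
      have keyR := congrArg (fun t : ℕ => (t : R)) (choose_key (jj + d + 1) jj)
      push_cast at keyR
      linear_combination (w ^ (d + 2) * A ^ (jj + 1)) * keyR
    · have hub : jj ≤ n + 1 := by omega
      rcases (by omega : jj = n ∨ jj = n + 1) with h' | h' <;> subst h'
      · rw [show jj + 2 - (jj + 1) = 1 from by omega, show jj + 1 - jj = 1 from by omega,
          show jj + 1 - (jj + 1) = 0 from by omega, show jj - (jj + 1) = 0 from by omega]
        have e1 : (jj + 2 + (jj + 1)).choose (2 * (jj + 1)) = 2 * jj + 3 := by
          rw [show jj + 2 + (jj + 1) = (2 * jj + 2) + 1 from by omega,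
            show 2 * (jj + 1) = 2 * jj + 2 from by omega]
          exact Nat.choose_succ_self_right _
        have e2 : (jj + 1 + jj).choose (2 * jj) = 2 * jj + 1 := by
          rw [show jj + 1 + jj = (2 * jj) + 1 from by omega]
          exact Nat.choose_succ_self_right _
        have e3 : (jj + 1 + (jj + 1)).choose (2 * (jj + 1)) = 1 := by
          rw [show jj + 1 + (jj + 1) = 2 * (jj + 1) from by omega]
          exact Nat.choose_self _
        have e4 : (jj + (jj + 1)).choose (2 * (jj + 1)) = 0 :=
          Nat.choose_eq_zero_of_lt (by omega)
        rw [e1, e2, e3, e4]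
        push_cast
        ring
      · rw [show n + 2 - (n + 1 + 1) = 0 from by omega, show n + 1 - (n + 1) = 0 from by omega,
          show n + 1 - (n + 1 + 1) = 0 from by omega, show n - (n + 1 + 1) = 0 from by omega]
        have e1 : (n + 2 + (n + 1 + 1)).choose (2 * (n + 1 + 1)) = 1 := by
          rw [show n + 2 + (n + 1 + 1) = 2 * (n + 1 + 1) from by omega]
          exact Nat.choose_self _
        have e2 : (n + 1 + (n + 1)).choose (2 * (n + 1)) = 1 := by
          rw [show n + 1 + (n + 1) = 2 * (n + 1) from by omega]
          exact Nat.choose_self _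
        have e3 : (n + 1 + (n + 1 + 1)).choose (2 * (n + 1 + 1)) = 0 :=
          Nat.choose_eq_zero_of_lt (by omega)
        have e4 : (n + (n + 1 + 1)).choose (2 * (n + 1 + 1)) = 0 :=
          Nat.choose_eq_zero_of_lt (by omega)
        rw [e1, e2, e3, e4]
        push_cast
        ring

lemma hAT_shift (w A : R) (n : ℕ) :
    A * (Tt w A (n + 1) + Pp w A (n + 1))
      = ∑ j ∈ range (n + 3), (fun j => match j with
          | 0 => (0 : R)
          | jj + 1 => ((jj : R) + 1) * ((n + 1 + jj).choose (2 * jj) : R) * w ^ (n + 1 - jj)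
              * A ^ (jj + 1)) j := by
  rw [Finset.sum_range_succ' _ (n + 2)]
  simp only []
  rw [Tt, Pp, show n + 1 + 1 = n + 2 from rfl, ← Finset.sum_add_distrib, Finset.mul_sum, add_zero]
  exact Finset.sum_congr rfl fun j hj => by ring

lemma R2 (w A : R) (n : ℕ) :
    Tt w A (n + 2) = 2 * w * Tt w A (n + 1) - w ^ 2 * Tt w A n
      + A * (Tt w A (n + 1) + Pp w A (n + 1)) := by
  rw [hAT_shift]
  rw [Tt_pad w A (n + 1) (n + 3) (by omega), Tt_pad w A n (n + 3) (by omega),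
    Tt, show n + 2 + 1 = n + 3 from rfl]
  rw [Finset.mul_sum, Finset.mul_sum, ← Finset.sum_sub_distrib, ← Finset.sum_add_distrib]
  refine Finset.sum_congr rfl fun j hj => ?_
  simp only [Finset.mem_range] at hj
  match j with
  | 0 =>
    simp only []
    push_cast
    ring
  | jj + 1 =>
    simp only []
    rcases Nat.lt_or_ge jj n with h | h
    · obtain ⟨d, rfl⟩ : ∃ d, n = jj + 1 + d := ⟨n - jj - 1, by omega⟩
      rw [show jj + 1 + d + 2 - (jj + 1) = d + 2 from by omega,
        show jj + 1 + d + 1 - jj = d + 2 from by omega,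
        show jj + 1 + d + 1 - (jj + 1) = d + 1 from by omega,
        show jj + 1 + d - (jj + 1) = d from by omega,
        show jj + 1 + d + 2 + (jj + 1) = jj + d + 1 + 3 + jj from by omega,
        show 2 * (jj + 1) = 2 * jj + 2 from by omega,
        show jj + 1 + d + 1 + jj = jj + d + 1 + 1 + jj from by omega,
        show jj + 1 + d + 1 + (jj + 1) = jj + d + 1 + 2 + jj from by omega,
        show jj + 1 + d + (jj + 1) = jj + d + 1 + 1 + jj from by omega]
      have keyR := congrArg (fun t : ℕ => (t : R)) (choose_key (jj + d + 1) jj)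
      push_cast at keyR
      push_cast
      linear_combination (((jj : R) + 1) * w ^ (d + 2) * A ^ (jj + 1)) * keyR
    · have hub : jj ≤ n + 1 := by omega
      rcases (by omega : jj = n ∨ jj = n + 1) with h' | h' <;> subst h'
      · rw [show jj + 2 - (jj + 1) = 1 from by omega, show jj + 1 - jj = 1 from by omega,
          show jj + 1 - (jj + 1) = 0 from by omega, show jj - (jj + 1) = 0 from by omega]
        have e1 : (jj + 2 + (jj + 1)).choose (2 * (jj + 1)) = 2 * jj + 3 := by
          rw [show jj + 2 + (jj + 1) = (2 * jj + 2) + 1 from by omega,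
            show 2 * (jj + 1) = 2 * jj + 2 from by omega]
          exact Nat.choose_succ_self_right _
        have e2 : (jj + 1 + jj).choose (2 * jj) = 2 * jj + 1 := by
          rw [show jj + 1 + jj = (2 * jj) + 1 from by omega]
          exact Nat.choose_succ_self_right _
        have e3 : (jj + 1 + (jj + 1)).choose (2 * (jj + 1)) = 1 := by
          rw [show jj + 1 + (jj + 1) = 2 * (jj + 1) from by omega]
          exact Nat.choose_self _
        have e4 : (jj + (jj + 1)).choose (2 * (jj + 1)) = 0 :=
          Nat.choose_eq_zero_of_lt (by omega)
        rw [e1, e2, e3, e4]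
        push_cast
        ring
      · rw [show n + 2 - (n + 1 + 1) = 0 from by omega, show n + 1 - (n + 1) = 0 from by omega,
          show n + 1 - (n + 1 + 1) = 0 from by omega, show n - (n + 1 + 1) = 0 from by omega]
        have e1 : (n + 2 + (n + 1 + 1)).choose (2 * (n + 1 + 1)) = 1 := by
          rw [show n + 2 + (n + 1 + 1) = 2 * (n + 1 + 1) from by omega]
          exact Nat.choose_self _
        have e2 : (n + 1 + (n + 1)).choose (2 * (n + 1)) = 1 := by
          rw [show n + 1 + (n + 1) = 2 * (n + 1) from by omega]
          exact Nat.choose_self _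
        have e3 : (n + 1 + (n + 1 + 1)).choose (2 * (n + 1 + 1)) = 0 :=
          Nat.choose_eq_zero_of_lt (by omega)
        have e4 : (n + (n + 1 + 1)).choose (2 * (n + 1 + 1)) = 0 :=
          Nat.choose_eq_zero_of_lt (by omega)
        rw [e1, e2, e3, e4]
        push_cast
        ring

lemma lemA (u v : R) (n : ℕ) :
    (u - v) * Pp (-(u * v)) ((u + v) ^ 2) n = u ^ (2 * n + 1) - v ^ (2 * n + 1) := by
  suffices h : ∀ m : ℕ,
      ((u - v) * Pp (-(u * v)) ((u + v) ^ 2) m = u ^ (2 * m + 1) - v ^ (2 * m + 1)) ∧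
      ((u - v) * Pp (-(u * v)) ((u + v) ^ 2) (m + 1)
        = u ^ (2 * (m + 1) + 1) - v ^ (2 * (m + 1) + 1)) from (h n).1
  intro m
  induction m with
  | zero =>
    constructor
    · simp [Pp]
    · simp [Pp, Finset.sum_range_succ]
      ring
  | succ i ih =>
    refine ⟨ih.2, ?_⟩
    rw [show i + 1 + 1 = i + 2 from rfl, R1]
    linear_combination ((u + v) ^ 2 + 2 * (-(u * v))) * ih.2 - (-(u * v)) ^ 2 * ih.1

lemma lemB (u v : R) (n : ℕ) :
    2 * (u - v) ^ 3 * Tt (-(u * v)) ((u + v) ^ 2) n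
      = (u + v) * ((2 * (n : R) + 1) * (u - v) * (u ^ (2 * n + 1) + v ^ (2 * n + 1))
          - (u + v) * (u ^ (2 * n + 1) - v ^ (2 * n + 1))) := by
  suffices h : ∀ m : ℕ,
      (2 * (u - v) ^ 3 * Tt (-(u * v)) ((u + v) ^ 2) m
        = (u + v) * ((2 * (m : R) + 1) * (u - v) * (u ^ (2 * m + 1) + v ^ (2 * m + 1))
          - (u + v) * (u ^ (2 * m + 1) - v ^ (2 * m + 1)))) ∧
      (2 * (u - v) ^ 3 * Tt (-(u * v)) ((u + v) ^ 2) (m + 1)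
        = (u + v) * ((2 * ((m : R) + 1) + 1) * (u - v)
            * (u ^ (2 * (m + 1) + 1) + v ^ (2 * (m + 1) + 1))
          - (u + v) * (u ^ (2 * (m + 1) + 1) - v ^ (2 * (m + 1) + 1)))) from (h n).1
  intro m
  induction m with
  | zero =>
    constructor
    · simp [Tt]
      ring
    · simp [Tt, Finset.sum_range_succ]
      ring
  | succ i ih =>
    obtain ⟨ih1, ih2⟩ := ih
    refine ⟨by push_cast; linear_combination ih2, ?_⟩
    rw [show i + 1 + 1 = i + 2 from rfl, R2]
    have hP := lemA u v (i + 1)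
    push_cast at ih1 ih2 ⊢
    linear_combination (2 * (-(u * v)) + (u + v) ^ 2) * ih2 - (-(u * v)) ^ 2 * ih1
      + 2 * (u + v) ^ 2 * (u - v) ^ 2 * hP

end Aux

noncomputable def phi : ℝ := (1 + Real.sqrt 5) / 2
noncomputable def psi : ℝ := (1 - Real.sqrt 5) / 2

lemma s5_sq : Real.sqrt 5 ^ 2 = 5 := Real.sq_sqrt (by norm_num)
lemma s5_pos : (0:ℝ) < Real.sqrt 5 := Real.sqrt_pos.2 (by norm_num)

lemma phi_ne : phi ≠ 0 := by
  have := s5_pos; unfold phi; positivity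

lemma phi_psi : phi * psi = -1 := by
  have h := s5_sq
  unfold phi psi
  nlinarith [h]

lemma psi_ne : psi ≠ 0 := by
  intro h
  have := phi_psi
  rw [h, mul_zero] at this
  norm_num at this

lemma phi_sq : phi ^ 2 = phi + 1 := by
  have h := s5_sq
  unfold phi
  nlinarith [h]

lemma psi_sq : psi ^ 2 = psi + 1 := by
  have h := s5_sq
  unfold psi
  nlinarith [h]

lemma ext_rec (f : ℤ → ℤ) (g : ℤ → ℝ) (h0 : (f 0 : ℝ) = g 0) (h1 : (f 1 : ℝ) = g 1)
    (hf : ∀ n : ℤ, f n = f (n - 1) + f (n - 2))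
    (hg : ∀ n : ℤ, g n = g (n - 1) + g (n - 2)) :
    ∀ m : ℤ, (f m : ℝ) = g m := by
  have key : ∀ m : ℤ, ((f m : ℝ) = g m ∧ (f (m + 1) : ℝ) = g (m + 1)) := by
    intro m
    induction m using Int.induction_on with
    | zero => exact ⟨h0, h1⟩
    | succ i ih =>
      refine ⟨ih.2, ?_⟩
      have e1 := hf ((i : ℤ) + 2)
      have e2 := hg ((i : ℤ) + 2)
      rw [show ((i : ℤ) + 2 - 1) = (i : ℤ) + 1 from by ring,
        show ((i : ℤ) + 2 - 2) = (i : ℤ) from by ring] at e1 e2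
      rw [show ((i : ℤ) + 1 + 1) = (i : ℤ) + 2 from by ring, e1, e2]
      push_cast
      rw [ih.1, ih.2]
    | pred i ih =>
      have e1 := hf (-(i : ℤ) + 1)
      have e2 := hg (-(i : ℤ) + 1)
      rw [show (-(i : ℤ) + 1 - 1) = -(i : ℤ) from by ring,
        show (-(i : ℤ) + 1 - 2) = -(i : ℤ) - 1 from by ring] at e1 e2
      have c1 : (f (-(i : ℤ) + 1) : ℝ) = (f (-(i : ℤ)) : ℝ) + (f (-(i : ℤ) - 1) : ℝ) := by
        exact_mod_cast congrArg (Int.cast : ℤ → ℝ) e1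
      constructor
      · linarith [c1, ih.1, ih.2, e2]
      · rw [show (-(i : ℤ) - 1 + 1) = -(i : ℤ) from by ring]
        exact ih.1
  exact fun m => (key m).1

lemma pow_rec (x : ℝ) (hx : x ≠ 0) (hsq : x ^ 2 = x + 1) (m : ℤ) :
    x ^ m = x ^ (m - 1) + x ^ (m - 2) := by
  have h1 : x ^ m = x ^ (m - 2) * x ^ (2 : ℤ) := by
    rw [← zpow_add₀ hx]; congr 1; ring
  have h2 : x ^ (m - 1) = x ^ (m - 2) * x ^ (1 : ℤ) := by
    rw [← zpow_add₀ hx]; congr 1; ring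
  rw [h1, h2, show ((2:ℤ)) = ((2:ℕ):ℤ) from rfl, zpow_natCast,
    show ((1:ℤ)) = ((1:ℕ):ℤ) from rfl, zpow_natCast, hsq]
  ring

lemma binetF (F : ℤ → ℤ) (hF0 : F 0 = 0) (hF1 : F 1 = 1)
    (hF : ∀ n : ℤ, F n = F (n - 1) + F (n - 2)) (m : ℤ) :
    (F m : ℝ) = (phi ^ m - psi ^ m) / Real.sqrt 5 := by
  refine ext_rec F (fun m => (phi ^ m - psi ^ m) / Real.sqrt 5) ?_ ?_ hF ?_ m
  · simp [hF0]
  · have h := s5_sq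
    have hs := s5_pos
    simp only [hF1, zpow_one, phi, psi]
    push_cast
    field_simp
    ring
  · intro m
    rw [pow_rec phi phi_ne phi_sq m, pow_rec psi psi_ne psi_sq m]
    ring

lemma binetL (L : ℤ → ℤ) (hL0 : L 0 = 2) (hL1 : L 1 = 1)
    (hL : ∀ n : ℤ, L n = L (n - 1) + L (n - 2)) (m : ℤ) :
    (L m : ℝ) = phi ^ m + psi ^ m := by
  refine ext_rec L (fun m => phi ^ m + psi ^ m) ?_ ?_ hL ?_ m
  · norm_num [hL0]
  · simp only [hL1, zpow_one, phi, psi]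
    push_cast
    ring
  · intro m
    rw [pow_rec phi phi_ne phi_sq m, pow_rec psi psi_ne psi_sq m]
    ring

theorem statement7 (F L : ℤ → ℤ)
    (hF0 : F 0 = 0) (hF1 : F 1 = 1) (hF : ∀ n : ℤ, F n = F (n - 1) + F (n - 2))
    (hL0 : L 0 = 2) (hL1 : L 1 = 1) (hL : ∀ n : ℤ, L n = L (n - 1) + L (n - 2))
    (k n : ℕ) :
    (F (k : ℤ) : ℚ) ^ 3 * ∑ j ∈ Finset.range (n + 1),
        (-1 : ℚ) ^ ((k + 1) * (n + j)) * (j : ℚ) * ((n + j).choose (2 * j)) *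
          (L (k : ℤ) : ℚ) ^ (2 * j) =
      (1 / 10) * ((2 * (n : ℚ) + 1) * (F (2 * (k : ℤ)) : ℚ) *
          (L ((2 * (n : ℤ) + 1) * (k : ℤ)) : ℚ)
        - (F ((2 * (n : ℤ) + 1) * (k : ℤ)) : ℚ) * (L (k : ℤ) : ℚ) ^ 2) := by
  have hinj : Function.Injective (Rat.cast : ℚ → ℝ) := Rat.cast_injective
  apply hinj
  push_cast
  set u : ℝ := phi ^ k with hu
  set v : ℝ := psi ^ k with hv
  have hsne : Real.sqrt 5 ≠ 0 := ne_of_gt s5_pos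
  have hs := s5_sq
  have hFk : (F (k : ℤ) : ℝ) = (u - v) / Real.sqrt 5 := by
    rw [binetF F hF0 hF1 hF, zpow_natCast, zpow_natCast]
  have hLk : (L (k : ℤ) : ℝ) = u + v := by
    rw [binetL L hL0 hL1 hL, zpow_natCast, zpow_natCast]
  have hF2k : (F (2 * (k : ℤ)) : ℝ) = (u ^ 2 - v ^ 2) / Real.sqrt 5 := by
    rw [binetF F hF0 hF1 hF, show (2 * (k : ℤ)) = ((2 * k : ℕ) : ℤ) from by push_cast; ring,
      zpow_natCast, zpow_natCast, pow_mul', pow_mul', hu, hv]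
  have hM : ((2 * (n : ℤ) + 1) * (k : ℤ)) = (((2 * n + 1) * k : ℕ) : ℤ) := by push_cast; ring
  have hLM : (L ((2 * (n : ℤ) + 1) * (k : ℤ)) : ℝ) = u ^ (2 * n + 1) + v ^ (2 * n + 1) := by
    rw [binetL L hL0 hL1 hL, hM, zpow_natCast, zpow_natCast, pow_mul', pow_mul', hu, hv]
  have hFM : (F ((2 * (n : ℤ) + 1) * (k : ℤ)) : ℝ)
      = (u ^ (2 * n + 1) - v ^ (2 * n + 1)) / Real.sqrt 5 := by
    rw [binetF F hF0 hF1 hF, hM, zpow_natCast, zpow_natCast, pow_mul', pow_mul', hu, hv]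
  have hsum : (∑ j ∈ Finset.range (n + 1),
        (-1 : ℝ) ^ ((k + 1) * (n + j)) * (j : ℝ) * ((n + j).choose (2 * j) : ℝ) *
          (L (k : ℤ) : ℝ) ^ (2 * j))
      = Tt (-(u * v)) ((u + v) ^ 2) n := by
    rw [Tt]
    refine Finset.sum_congr rfl fun j hj => ?_
    simp only [Finset.mem_range] at hj
    have hjn : j ≤ n := by omega
    have huv : -(u * v) = (-1 : ℝ) ^ (k + 1) := by
      rw [hu, hv, ← mul_pow, phi_psi, pow_succ]
      ring
    have hw : ((-1 : ℝ)) ^ ((k + 1) * (n + j)) = (-(u * v)) ^ (n - j) := by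
      rw [huv, pow_mul]
      have h2 : ((-1 : ℝ) ^ (k + 1)) ^ (n + j) = ((-1 : ℝ) ^ (k + 1)) ^ ((n - j) + 2 * j) := by
        congr 1
        omega
      have he : ((-1 : ℝ) ^ (k + 1)) ^ (2 * j) = 1 := by
        rw [← pow_mul]
        exact Even.neg_one_pow ⟨(k + 1) * j, by ring⟩
      rw [h2, pow_add, he, mul_one]
    rw [hw, hLk, show (u + v) ^ (2 * j) = ((u + v) ^ 2) ^ j from pow_mul _ 2 j]
    ring
  rw [hsum, hFk, hF2k, hLM, hFM, hLk]
  have hB := lemB u v n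
  clear hu hv
  clear_value u v
  have hd : ∀ a : ℝ, a / Real.sqrt 5 = a * Real.sqrt 5 / 5 := fun a => by
    rw [div_eq_div_iff hsne (by norm_num)]
    linear_combination (-a) * hs
  simp only [hd]
  linear_combination (Real.sqrt 5 / 50) * hB
    + ((u - v) ^ 3 * Tt (-(u * v)) ((u + v) ^ 2) n * Real.sqrt 5 / 125) * hs
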